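/- If G and H are good graphs, then there exists a simple distribution (a distribution all of whose pebbles lie on a single vertex) on G □ H that requires exactly γ(G)·γ(H) pebbles to cover G □ H. In particular, γ(G □ H) ≥ γ(G)·γ(H). -/

import Mathlib

open SimpleGraph Finset

/-- A pebbling step: remove two pebbles from `u` and place one on an adjacent vertex `v`. -/
def PebblingStep {V : Type*} [DecidableEq V] (G : SimpleGraph V) (D D' : V → ℕ) : Prop :=
  ∃ u v, G.Adj u v ∧ 2 ≤ D u ∧
    D' = fun w => if w = u then D u - 2 else if w = v then D v + 1 else D w

/-- A distribution is coverable if pebbling steps can put a pebble on every vertex. -/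
def Coverable {V : Type*} [DecidableEq V] (G : SimpleGraph V) (D : V → ℕ) : Prop :=
  ∃ D', Relation.ReflTransGen (PebblingStep G) D D' ∧ ∀ v, 1 ≤ D' v

/-- The cover pebbling number: the least `N` such that every distribution of `N` pebbles
is coverable. -/
noncomputable def coverPebblingNumber {V : Type*} [DecidableEq V] [Fintype V]
    (G : SimpleGraph V) : ℕ :=
  sInf {N | ∀ D : V → ℕ, ∑ v, D v = N → Coverable G D}

/-- A color-respecting pebbling step on a colored distribution. -/
def ColorStep {V C : Type*} [DecidableEq V] [DecidableEq C] (G : SimpleGraph V)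
    (D D' : V → C → ℕ) : Prop :=
  ∃ u v c, G.Adj u v ∧ 2 ≤ D u c ∧
    D' = fun w d => if w = u ∧ d = c then D u c - 2
      else if w = v ∧ d = c then D v c + 1 else D w d

/-- A colored distribution is `Q`-coverable if color-respecting steps can put at least `Q`
pebbles on every vertex. -/
def QCoverable {V C : Type*} [DecidableEq V] [DecidableEq C] [Fintype C] (G : SimpleGraph V)
    (Q : ℕ) (D : V → C → ℕ) : Prop :=
  ∃ D', Relation.ReflTransGen (ColorStep G) D D' ∧ ∀ v, Q ≤ ∑ c, D' v c

/-- A graph is good if its cover pebbling number is realized by a simple distribution. -/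
def IsGood {V : Type*} [DecidableEq V] [Fintype V] (G : SimpleGraph V) : Prop :=
  ∃ u : V, coverPebblingNumber G = ∑ w : V, 2 ^ G.dist u w

set_option linter.unusedSectionVars false

section Aux

variable {V : Type*} [DecidableEq V] [Fintype V] {K : SimpleGraph V}

lemma sum_step_eq (c : V → ℕ) {u v : V} (huv : u ≠ v) {D : V → ℕ} (h2 : 2 ≤ D u) :
    (∑ q, (if q = u then D u - 2 else if q = v then D v + 1 else D q) * c q) + 2 * c u
      = (∑ q, D q * c q) + c v := by
  have key : ∀ q, (if q = u then D u - 2 else if q = v then D v + 1 else D q) * c q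
      + (if q = u then 2 * c u else 0)
      = D q * c q + (if q = v then c q else 0) := by
    intro q
    by_cases hqu : q = u
    · subst hqu
      simp only [if_pos rfl, if_neg huv, if_true, eq_self_iff_true]
      have h1 := Nat.sub_mul (D q) 2 (c q)
      have h3 : 2 * c q ≤ D q * c q := Nat.mul_le_mul_right _ h2
      omega
    · by_cases hqv : q = v
      · subst hqv
        simp only [if_neg hqu, if_pos rfl, if_true, eq_self_iff_true]
        ring
      · simp [hqu, hqv]
  have hsum := Finset.sum_congr rfl (fun q (_ : q ∈ (univ : Finset V)) => key q)
  simpa [Finset.sum_add_distrib, Finset.sum_ite_eq'] using hsum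

lemma step_sum_exists (c : V → ℕ) {D D' : V → ℕ} (h : PebblingStep K D D') :
    ∃ u v, K.Adj u v ∧ (∑ q, D' q * c q) + 2 * c u = (∑ q, D q * c q) + c v := by
  obtain ⟨u, v, hadj, h2, rfl⟩ := h
  exact ⟨u, v, hadj, sum_step_eq c hadj.ne h2⟩

lemma weight_le_of_reach (c : V → ℕ) (hc : ∀ u v, K.Adj u v → c v ≤ 2 * c u)
    {D D' : V → ℕ} (h : Relation.ReflTransGen (PebblingStep K) D D') :
    ∑ q, D' q * c q ≤ ∑ q, D q * c q := by
  induction h with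
  | refl => exact le_rfl
  | tail _ hstep ih =>
    obtain ⟨u, v, hadj, heq⟩ := step_sum_exists c hstep
    have := hc u v hadj
    omega

lemma simple_lower (hK : K.Connected) (p : V) {N : ℕ}
    (h : Coverable K (fun q => if q = p then N else 0)) :
    ∑ q, 2 ^ K.dist p q ≤ N := by
  obtain ⟨D', hreach, hcov⟩ := h
  have hc : ∀ u v, K.Adj u v → 2 ^ K.dist p v ≤ 2 * 2 ^ K.dist p u := by
    intro u v hadj
    have h1 : K.dist p v ≤ K.dist p u + 1 := by
      have := hK.dist_triangle (u := p) (v := u) (w := v)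
      have h2 : K.dist u v = 1 := SimpleGraph.dist_eq_one_iff_adj.mpr hadj
      omega
    calc 2 ^ K.dist p v ≤ 2 ^ (K.dist p u + 1) := Nat.pow_le_pow_right (by norm_num) h1
      _ = 2 * 2 ^ K.dist p u := by ring
  have hw := weight_le_of_reach (fun q => 2 ^ K.dist p q) hc hreach
  have h1 : ∑ q, 2 ^ K.dist p q ≤ ∑ q, D' q * 2 ^ K.dist p q := by
    apply Finset.sum_le_sum
    intro q _
    have := hcov q
    calc 2 ^ K.dist p q = 1 * 2 ^ K.dist p q := (one_mul _).symm
      _ ≤ D' q * 2 ^ K.dist p q := Nat.mul_le_mul_right _ (hcov q)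
  have h2 : (∑ q, (if q = p then N else 0) * 2 ^ K.dist p q) = N := by
    rw [Finset.sum_congr rfl (fun q (_ : q ∈ univ) => by
      rw [ite_mul, zero_mul])]
    rw [Finset.sum_ite_eq' univ p (fun q => N * 2 ^ K.dist p q)]
    simp [SimpleGraph.dist_self]
  omega

lemma move_many {u v : V} (hadj : K.Adj u v) (k : ℕ) (D : V → ℕ) (hk : 2 * k ≤ D u) :
    Relation.ReflTransGen (PebblingStep K) D
      (fun w => if w = u then D u - 2 * k else if w = v then D v + k else D w) := by
  induction k with
  | zero =>
    have : (fun w => if w = u then D u - 2 * 0 else if w = v then D v + 0 else D w) = D := by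
      funext w
      by_cases h1 : w = u
      · simp [h1]
      · by_cases h2 : w = v
        · subst h2; simp [h1, hadj.ne']
        · simp [h1, h2]
    rw [this]
  | succ n ih =>
    have hn : 2 * n ≤ D u := by omega
    have hvu : ¬ (v = u) := hadj.ne'
    refine Relation.ReflTransGen.tail (ih hn) ⟨u, v, hadj, ?_, ?_⟩
    · simp only []
      simp only [if_true, eq_self_iff_true]
      omega
    · funext w
      by_cases h1 : w = u
      · subst h1
        simp [hvu]
        omega
      · by_cases h2 : w = v
        · subst h2
          simp [h1, hvu]
          omega
        · simp [h1, h2]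

lemma move_along_walk {p q : V} (w : K.Walk p q) :
    ∀ D : V → ℕ, 2 ^ w.length ≤ D p →
    ∃ D', Relation.ReflTransGen (PebblingStep K) D D' ∧
      (∀ x, D x ≤ D' x + (if x = p then 2 ^ w.length else 0)) ∧
      D q + 1 ≤ D' q + (if q = p then 2 ^ w.length else 0) := by
  induction w with
  | nil =>
    intro D hD
    refine ⟨D, Relation.ReflTransGen.refl, fun x => by omega, ?_⟩
    simp only [SimpleGraph.Walk.length_nil, pow_zero]
    simp
  | @cons a b c h w' ih =>
    intro D hD
    rw [SimpleGraph.Walk.length_cons] at hD ⊢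
    have hab : ¬ (b = a) := h.ne'
    have hab' : ¬ (a = b) := h.ne
    have hk : 2 * 2 ^ w'.length ≤ D a := by
      have : 2 * 2 ^ w'.length = 2 ^ (w'.length + 1) := by ring
      omega
    have hreach1 := move_many h (2 ^ w'.length) D hk
    set D1 : V → ℕ := fun x => if x = a then D a - 2 * 2 ^ w'.length
      else if x = b then D b + 2 ^ w'.length else D x with hD1
    have hD1a : D1 a = D a - 2 * 2 ^ w'.length := by simp [hD1]
    have hD1b : D1 b = D b + 2 ^ w'.length := by simp [hD1, hab]
    have hD1x : ∀ x, x ≠ a → x ≠ b → D1 x = D x := by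
      intro x h1 h2; simp [hD1, h1, h2]
    obtain ⟨D', hreach2, hmain, hlast⟩ := ih D1 (by omega)
    refine ⟨D', hreach1.trans hreach2, ?_, ?_⟩
    · intro x
      have hm := hmain x
      by_cases h1 : x = a
      · subst h1
        rw [if_neg hab'] at hm
        rw [hD1a] at hm
        simp only [eq_self_iff_true, if_true]
        have : 2 ^ (w'.length + 1) = 2 * 2 ^ w'.length := by ring
        omega
      · by_cases h2 : x = b
        · subst h2
          rw [if_pos rfl] at hm
          rw [if_neg h1]
          omega
        · rw [if_neg h2] at hm
          rw [if_neg h1]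
          rw [hD1x x h1 h2] at hm
          omega
    · by_cases h1 : c = a
      · subst h1
        rw [if_neg hab'] at hlast
        rw [hD1a] at hlast
        simp only [eq_self_iff_true, if_true]
        have : 2 ^ (w'.length + 1) = 2 * 2 ^ w'.length := by ring
        omega
      · by_cases h2 : c = b
        · subst h2
          rw [if_pos rfl, hD1b] at hlast
          rw [if_neg h1]
          omega
        · rw [if_neg h2, hD1x c h1 h2] at hlast
          rw [if_neg h1]
          omega

lemma cover_from_vertex (hK : K.Connected) (p : V) (T : Finset V) :
    ∀ D : V → ℕ, (∑ q ∈ T, 2 ^ K.dist p q) ≤ D p →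
    ∃ D', Relation.ReflTransGen (PebblingStep K) D D' ∧
      (∀ q ∈ T, 1 ≤ D' q) ∧
      ∀ x, D x ≤ D' x + (if x = p then ∑ q ∈ T, 2 ^ K.dist p q else 0) := by
  induction T using Finset.induction_on with
  | empty =>
    intro D _
    exact ⟨D, Relation.ReflTransGen.refl, by simp, fun x => by simp⟩
  | @insert a s ha ih =>
    intro D hD
    rw [Finset.sum_insert ha] at hD
    obtain ⟨w, hw⟩ := hK.exists_walk_length_eq_dist p a
    obtain ⟨D1, hreach1, hmain1, hlast1⟩ := move_along_walk w D (by rw [hw]; omega)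
    rw [hw] at hmain1 hlast1
    have hD1p : ∑ q ∈ s, 2 ^ K.dist p q ≤ D1 p := by
      have := hmain1 p
      rw [if_pos rfl] at this
      by_cases hap : a = p
      · have h0 : K.dist p a = 0 := by rw [hap]; exact SimpleGraph.dist_self
        have := hlast1
        rw [if_pos hap, h0] at this
        omega
      · omega
    obtain ⟨D', hreach2, hcov, hmain2⟩ := ih D1 hD1p
    refine ⟨D', hreach1.trans hreach2, ?_, ?_⟩
    · intro q hq
      rcases Finset.mem_insert.mp hq with hq | hq
      · subst hq
        by_cases hap : q = p
        · have h0 : K.dist p q = 0 := by rw [hap]; exact SimpleGraph.dist_self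
          rw [if_pos hap, h0] at hlast1
          have hm2 := hmain2 q
          rw [if_pos hap] at hm2
          rw [hap] at hm2 hlast1 ⊢
          have hone : (2:ℕ) ^ K.dist p q = 1 := by rw [h0, pow_zero]
          omega
        · rw [if_neg hap] at hlast1
          have hm2 := hmain2 q
          rw [if_neg hap] at hm2
          omega
      · exact hcov q hq
    · intro x
      have h1 := hmain1 x
      have h2 := hmain2 x
      rw [Finset.sum_insert ha]
      by_cases hxp : x = p
      · rw [if_pos hxp] at h1 h2 ⊢
        omega
      · rw [if_neg hxp] at h1 h2 ⊢
        omega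

lemma cover_simple (hK : K.Connected) (p : V) (D : V → ℕ)
    (hD : (∑ q, 2 ^ K.dist p q) ≤ D p) : Coverable K D := by
  obtain ⟨D', hreach, hcov, _⟩ := cover_from_vertex hK p Finset.univ D hD
  exact ⟨D', hreach, fun v => hcov v (Finset.mem_univ v)⟩

lemma exists_closer (hK : K.Connected) {r v : V} (hv : v ≠ r) :
    ∃ u, K.Adj v u ∧ K.dist r u + 1 = K.dist r v := by
  obtain ⟨w, hw⟩ := hK.exists_walk_length_eq_dist v r
  cases w with
  | nil => exact absurd rfl hv
  | @cons a b c h w' =>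
    refine ⟨b, h, ?_⟩
    have h1 : K.dist b r ≤ w'.length := SimpleGraph.dist_le w'
    have h2 : K.dist r v ≤ K.dist r b + 1 := by
      have ht := hK.dist_triangle (u := r) (v := b) (w := v)
      have : K.dist b v ≤ 1 := by
        rw [← SimpleGraph.dist_eq_one_iff_adj.mpr h.symm]
      omega
    rw [SimpleGraph.Walk.length_cons] at hw
    rw [SimpleGraph.dist_comm (u := v) (v := r)] at hw
    rw [SimpleGraph.dist_comm (u := r) (v := b)]
    rw [SimpleGraph.dist_comm (u := r) (v := b)] at h2
    omega

lemma consolidate (hK : K.Connected) (r : V) (M : ℕ) (hM : ∀ q, K.dist r q ≤ M) :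
    ∀ n : ℕ, ∀ D : V → ℕ, ∑ v, D v ≤ n →
    ∃ D', Relation.ReflTransGen (PebblingStep K) D D' ∧ (∀ v, v ≠ r → D' v ≤ 1) ∧
      ∑ q, D q * 2 ^ (M - K.dist r q) ≤ ∑ q, D' q * 2 ^ (M - K.dist r q) := by
  intro n
  induction n with
  | zero =>
    intro D hsum
    refine ⟨D, Relation.ReflTransGen.refl, fun v _ => ?_, le_rfl⟩
    have : D v ≤ ∑ x, D x := Finset.single_le_sum (fun x _ => Nat.zero_le _) (Finset.mem_univ v)
    omega
  | succ n ih =>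
    intro D hsum
    by_cases hall : ∀ v, v ≠ r → D v ≤ 1
    · exact ⟨D, Relation.ReflTransGen.refl, hall, le_rfl⟩
    · push_neg at hall
      obtain ⟨v, hvr, hv2⟩ := hall
      obtain ⟨u, hadj, hdist⟩ := exists_closer hK hvr
      have hv2' : 2 ≤ D v := hv2
      set D1 : V → ℕ := fun w => if w = v then D v - 2 else if w = u then D u + 1 else D w
        with hD1def
      have hstep : PebblingStep K D D1 := ⟨v, u, hadj, hv2', rfl⟩
      have hsum1 : ∑ x, D1 x ≤ n := by
        simp only [hD1def]
        have := sum_step_eq (fun _ => 1) hadj.ne hv2'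
        simp only [mul_one] at this
        omega
      have hweq : ∑ q, D q * 2 ^ (M - K.dist r q) = ∑ q, D1 q * 2 ^ (M - K.dist r q) := by
        simp only [hD1def]
        have heq := sum_step_eq (fun q => 2 ^ (M - K.dist r q)) hadj.ne hv2'
        have hMv := hM v
        have hMu := hM u
        have hpow : (2:ℕ) ^ (M - K.dist r u) = 2 * 2 ^ (M - K.dist r v) := by
          have h1 : M - K.dist r u = (M - K.dist r v) + 1 := by omega
          rw [h1]; ring
        omega
      obtain ⟨D', hreach, hsmall, hwle⟩ := ih D1 hsum1
      exact ⟨D', Relation.ReflTransGen.head hstep hreach, hsmall, by omega⟩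

lemma cover_set_nonempty (hK : K.Connected) :
    {N | ∀ D : V → ℕ, ∑ v, D v = N → Coverable K D}.Nonempty := by
  obtain ⟨r⟩ := hK.nonempty
  set M := (univ : Finset V).sup (fun q => K.dist r q) with hMdef
  have hMle : ∀ q, K.dist r q ≤ M := fun q => Finset.le_sup (f := fun q => K.dist r q)
    (Finset.mem_univ q)
  refine ⟨2 ^ M * (Fintype.card V + ∑ q, 2 ^ K.dist r q), fun D hsum => ?_⟩
  obtain ⟨D1, hreach, hsmall, hwle⟩ := consolidate hK r M hMle (∑ v, D v) D le_rfl
  have hlow : ∑ v, D v ≤ ∑ q, D q * 2 ^ (M - K.dist r q) := by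
    apply Finset.sum_le_sum; intro q _
    have h1 : 1 ≤ 2 ^ (M - K.dist r q) := Nat.one_le_two_pow
    calc D q = D q * 1 := (mul_one _).symm
      _ ≤ D q * 2 ^ (M - K.dist r q) := Nat.mul_le_mul_left _ h1
  have hup : ∑ q, D1 q * 2 ^ (M - K.dist r q)
      ≤ (D1 r + Fintype.card V) * 2 ^ M := by
    calc ∑ q, D1 q * 2 ^ (M - K.dist r q)
        ≤ ∑ q, ((if q = r then D1 r else 0) + 1) * 2 ^ M := by
          apply Finset.sum_le_sum; intro q _
          by_cases hq : q = r
          · subst hq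
            rw [if_pos rfl, SimpleGraph.dist_self, Nat.sub_zero]
            exact Nat.mul_le_mul (by omega) le_rfl
          · rw [if_neg hq]
            have h1 : D1 q ≤ 1 := hsmall q hq
            have h2 : (2:ℕ) ^ (M - K.dist r q) ≤ 2 ^ M := Nat.pow_le_pow_right (by norm_num)
              (Nat.sub_le _ _)
            calc D1 q * 2 ^ (M - K.dist r q) ≤ 1 * 2 ^ M := Nat.mul_le_mul (by omega) h2
              _ = (0 + 1) * 2 ^ M := by ring
      _ = (D1 r + Fintype.card V) * 2 ^ M := by
          rw [← Finset.sum_mul, Finset.sum_add_distrib, Finset.sum_ite_eq' univ r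
            (fun _ => D1 r)]
          simp [Finset.card_univ]
  have hpos : 0 < 2 ^ M := Nat.pow_pos (by norm_num)
  have hG : ∑ q, 2 ^ K.dist r q ≤ D1 r := by
    have hchain : 2 ^ M * (Fintype.card V + ∑ q, 2 ^ K.dist r q)
        ≤ (D1 r + Fintype.card V) * 2 ^ M := by omega
    rw [mul_comm] at hchain
    have := Nat.le_of_mul_le_mul_right hchain hpos
    omega
  obtain ⟨D2, hreach2, hcov⟩ := cover_simple hK r D1 hG
  exact ⟨D2, hreach.trans hreach2, hcov⟩

lemma boxProd_walk_length_ge {Vg Vh : Type*} {G : SimpleGraph Vg} {H : SimpleGraph Vh}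
    (hGc : G.Connected) (hHc : H.Connected) :
    ∀ {p q : Vg × Vh} (w : (G □ H).Walk p q),
      G.dist p.1 q.1 + H.dist p.2 q.2 ≤ w.length := by
  intro p q w
  induction w with
  | nil => simp [SimpleGraph.dist_self]
  | @cons a b c h w' ih =>
    rw [SimpleGraph.Walk.length_cons]
    rcases SimpleGraph.boxProd_adj.mp h with ⟨hadj, heq⟩ | ⟨hadj, heq⟩
    · have h1 : G.dist a.1 c.1 ≤ G.dist b.1 c.1 + 1 := by
        have ht := hGc.dist_triangle (u := a.1) (v := b.1) (w := c.1)
        have : G.dist a.1 b.1 = 1 := SimpleGraph.dist_eq_one_iff_adj.mpr hadj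
        omega
      rw [heq]
      omega
    · have h1 : H.dist a.2 c.2 ≤ H.dist b.2 c.2 + 1 := by
        have ht := hHc.dist_triangle (u := a.2) (v := b.2) (w := c.2)
        have : H.dist a.2 b.2 = 1 := SimpleGraph.dist_eq_one_iff_adj.mpr hadj
        omega
      rw [heq]
      omega

lemma boxProd_dist {Vg Vh : Type*} {G : SimpleGraph Vg} {H : SimpleGraph Vh}
    (hGc : G.Connected) (hHc : H.Connected) (p q : Vg × Vh) :
    (G □ H).dist p q = G.dist p.1 q.1 + H.dist p.2 q.2 := by
  apply le_antisymm
  · obtain ⟨w1, hw1⟩ := hGc.exists_walk_length_eq_dist p.1 q.1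
    obtain ⟨w2, hw2⟩ := hHc.exists_walk_length_eq_dist p.2 q.2
    have hle := SimpleGraph.dist_le ((w1.boxProdLeft H p.2).append (w2.boxProdRight G q.1))
    rw [SimpleGraph.Walk.length_append] at hle
    simp only [SimpleGraph.Walk.boxProdLeft, SimpleGraph.Walk.boxProdRight,
      SimpleGraph.Walk.length_map, hw1, hw2, Prod.mk.eta] at hle
    have e1 : (Walk.map (G.boxProdLeft H p.2).toHom w1).length = G.dist p.1 q.1 := by
      rw [SimpleGraph.Walk.length_map, hw1]
    have e2 : (Walk.map (G.boxProdRight H q.1).toHom w2).length = H.dist p.2 q.2 := by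
      rw [SimpleGraph.Walk.length_map, hw2]
    exact le_trans hle (Nat.add_le_add e1.le e2.le)
  · obtain ⟨w, hw⟩ := (hGc.boxProd hHc).exists_walk_length_eq_dist p q
    have := boxProd_walk_length_ge hGc hHc w
    omega

end Aux

theorem good_prod_lower_bound {Vg Vh : Type*}
    [DecidableEq Vg] [Fintype Vg] [DecidableEq Vh] [Fintype Vh]
    (G : SimpleGraph Vg) (H : SimpleGraph Vh)
    (hGc : G.Connected) (hHc : H.Connected) (hG : IsGood G) (hH : IsGood H) :
    (∃ p : Vg × Vh, ∑ q : Vg × Vh, 2 ^ (G □ H).dist p q =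
        coverPebblingNumber G * coverPebblingNumber H) ∧
      coverPebblingNumber G * coverPebblingNumber H ≤ coverPebblingNumber (G □ H) := by
  obtain ⟨u, hu⟩ := hG
  obtain ⟨v, hv⟩ := hH
  have hbox : ∀ q : Vg × Vh, (G □ H).dist (u, v) q = G.dist u q.1 + H.dist v q.2 :=
    fun q => boxProd_dist hGc hHc (u, v) q
  have hsum : ∑ q : Vg × Vh, 2 ^ (G □ H).dist (u, v) q
      = coverPebblingNumber G * coverPebblingNumber H := by
    rw [hu, hv, Fintype.sum_prod_type, Finset.sum_mul_sum]
    apply Finset.sum_congr rfl; intro a _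
    apply Finset.sum_congr rfl; intro b _
    rw [hbox (a, b), pow_add]
  refine ⟨⟨(u, v), hsum⟩, ?_⟩
  rw [coverPebblingNumber]
  apply le_csInf (cover_set_nonempty (hGc.boxProd hHc))
  intro N hN
  have hsumN : ∑ q : Vg × Vh, (if q = (u, v) then N else 0) = N := by
    simp [Finset.sum_ite_eq']
  have hcov := hN _ hsumN
  have hge := simple_lower (hGc.boxProd hHc) (u, v) hcov
  rw [hsum] at hge
  exact hge
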